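/- arXiv:2411.01620 — 2 statements merged into one kernel-verified Lean document; each statement's English description precedes it below -/
import Mathlib

section
/- Let a, b, t be complex numbers with |a·t| < 1 and |b·t| < 1. Then the family ((k,l) ↦ a^k · b^l · t^{k+l}) indexed by (k,l) ∈ Λ is absolutely summable, and ∑_{(k,l)∈Λ} a^k b^l t^{k+l} = (1 + a·b·t²) / ((1 − a²t²)(1 − b²t²)). -/
/-- Λ : the set of pairs (k,l) of nonnegative integers with k+l even. -/
def Lam : Set (ℕ × ℕ) := {kl | Even (kl.1 + kl.2)}

/-- For complex numbers a, b, t with |a·t| < 1 and |b·t| < 1, the family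
((k,l) ↦ a^k · b^l · t^(k+l)) indexed by (k,l) ∈ Λ is absolutely summable, and
∑_{(k,l)∈Λ} a^k b^l t^(k+l) = (1 + a·b·t²)/((1 − a²t²)(1 − b²t²)). -/
theorem lambda_sum_rational (a b t : ℂ)
    (ha : ‖a * t‖ < 1) (hb : ‖b * t‖ < 1) :
    Summable (fun kl : Lam =>
      ‖a ^ kl.val.1 * b ^ kl.val.2 * t ^ (kl.val.1 + kl.val.2)‖) ∧
    ∑' kl : Lam, a ^ kl.val.1 * b ^ kl.val.2 * t ^ (kl.val.1 + kl.val.2)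
      = (1 + a * b * t ^ 2) / ((1 - a ^ 2 * t ^ 2) * (1 - b ^ 2 * t ^ 2)) := by
  set F : ℕ × ℕ → ℂ := fun kl => a ^ kl.1 * b ^ kl.2 * t ^ (kl.1 + kl.2) with hF
  have hFF : ∀ kl : ℕ × ℕ, F kl = (a * t) ^ kl.1 * (b * t) ^ kl.2 := by
    intro kl; simp only [hF, pow_add, mul_pow]; ring
  have habs : Summable (fun kl : ℕ × ℕ => ‖F kl‖) := by
    have h1 : Summable (fun k : ℕ => ‖a * t‖ ^ k) :=
      summable_geometric_of_lt_one (norm_nonneg _) ha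
    have h2 : Summable (fun k : ℕ => ‖b * t‖ ^ k) :=
      summable_geometric_of_lt_one (norm_nonneg _) hb
    have := h1.mul_of_nonneg h2 (fun k => pow_nonneg (norm_nonneg _) _)
      (fun k => pow_nonneg (norm_nonneg _) _)
    refine this.congr fun kl => ?_
    simp [hFF kl, Function.uncurry, map_mul, map_pow]
  have hsum : Summable F := by
    have : Summable (fun kl : ℕ × ℕ => ‖F kl‖) := by simpa using habs
    exact this.of_norm
  have hS1 : Summable (fun kl : Lam => ‖F kl.val‖) := habs.subtype Lam
  refine ⟨hS1, ?_⟩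
  -- split Lam into even-even and odd-odd parts
  set gE : ℕ × ℕ → ℕ × ℕ := fun mn => (2 * mn.1, 2 * mn.2) with hgE
  set gO : ℕ × ℕ → ℕ × ℕ := fun mn => (2 * mn.1 + 1, 2 * mn.2 + 1) with hgO
  have hinjE : Function.Injective gE := by
    intro x y h; simp only [hgE, Prod.ext_iff] at h ⊢; omega
  have hinjO : Function.Injective gO := by
    intro x y h; simp only [hgO, Prod.ext_iff] at h ⊢; omega
  have hLam : Lam = Set.range gE ∪ Set.range gO := by
    ext ⟨k, l⟩
    simp only [Lam, Set.mem_setOf_eq, Set.mem_union, Set.mem_range, Prod.ext_iff, hgE, hgO,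
      Prod.exists]
    constructor
    · intro h
      rw [Nat.even_iff] at h
      rcases Nat.even_or_odd k with hk | hk
      · left; exact ⟨k / 2, l / 2, by rw [Nat.even_iff] at hk; omega⟩
      · right; exact ⟨k / 2, l / 2, by rw [Nat.odd_iff] at hk; omega⟩
    · rintro (⟨m, n, hm, hn⟩ | ⟨m, n, hm, hn⟩) <;> rw [Nat.even_iff] <;> omega
  have hxy : ‖a ^ 2 * t ^ 2‖ < 1 := by
    have : a ^ 2 * t ^ 2 = (a * t) ^ 2 := by ring
    rw [this, norm_pow]
    exact pow_lt_one₀ (norm_nonneg _) ha (by norm_num)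
  have hxy' : ‖b ^ 2 * t ^ 2‖ < 1 := by
    have : b ^ 2 * t ^ 2 = (b * t) ^ 2 := by ring
    rw [this, norm_pow]
    exact pow_lt_one₀ (norm_nonneg _) hb (by norm_num)
  have hga : Summable (fun m : ℕ => (a ^ 2 * t ^ 2) ^ m) :=
    summable_geometric_of_norm_lt_one (by simpa using hxy)
  have hgb : Summable (fun n : ℕ => (b ^ 2 * t ^ 2) ^ n) :=
    summable_geometric_of_norm_lt_one (by simpa using hxy')
  have hprod : ∑' mn : ℕ × ℕ, (a ^ 2 * t ^ 2) ^ mn.1 * (b ^ 2 * t ^ 2) ^ mn.2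
      = (1 - a ^ 2 * t ^ 2)⁻¹ * (1 - b ^ 2 * t ^ 2)⁻¹ := by
    have hmul : Summable (fun mn : ℕ × ℕ => (a ^ 2 * t ^ 2) ^ mn.1 * (b ^ 2 * t ^ 2) ^ mn.2) := by
      have h1 : Summable (fun m : ℕ => ‖a ^ 2 * t ^ 2‖ ^ m) :=
        summable_geometric_of_lt_one (norm_nonneg _) (by simpa using hxy)
      have h2 : Summable (fun n : ℕ => ‖b ^ 2 * t ^ 2‖ ^ n) :=
        summable_geometric_of_lt_one (norm_nonneg _) (by simpa using hxy')
      refine Summable.of_norm ?_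
      refine (h1.mul_of_nonneg h2 (fun _ => pow_nonneg (norm_nonneg _) _)
        (fun _ => pow_nonneg (norm_nonneg _) _)).congr fun mn => ?_
      simp [Function.uncurry, norm_mul, norm_pow]
    rw [Summable.tsum_prod hmul]
    simp_rw [tsum_mul_left, tsum_mul_right,
      tsum_geometric_of_norm_lt_one (by simpa using hxy : ‖a ^ 2 * t ^ 2‖ < 1),
      tsum_geometric_of_norm_lt_one (by simpa using hxy' : ‖b ^ 2 * t ^ 2‖ < 1)]
  have hdisj : Disjoint (Set.range gE) (Set.range gO) := by
    rw [Set.disjoint_left]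
    rintro ⟨k, l⟩ ⟨m, hm⟩ ⟨m', hm'⟩
    simp only [hgE, hgO, Prod.ext_iff] at hm hm'
    omega
  have key : ∑' kl : Lam, F kl.val
      = (∑' x : Set.range gE, F x.val) + ∑' x : Set.range gO, F x.val := by
    rw [show (∑' kl : Lam, F kl.val) = ∑' kl : ↑(Set.range gE ∪ Set.range gO), F kl.val by
        rw [← hLam]]
    exact Summable.tsum_union_disjoint hdisj (hsum.subtype _) (hsum.subtype _)
  have hE : ∑' x : Set.range gE, F x.val
      = (1 - a ^ 2 * t ^ 2)⁻¹ * (1 - b ^ 2 * t ^ 2)⁻¹ := by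
    rw [tsum_range (fun x => F x) hinjE, ← hprod]
    refine tsum_congr fun mn => ?_
    simp only [hF, hgE]; ring
  have hO : ∑' x : Set.range gO, F x.val
      = a * b * t ^ 2 * ((1 - a ^ 2 * t ^ 2)⁻¹ * (1 - b ^ 2 * t ^ 2)⁻¹) := by
    rw [tsum_range (fun x => F x) hinjO]
    have : ∀ mn : ℕ × ℕ, F (gO mn) = a * b * t ^ 2 *
        ((a ^ 2 * t ^ 2) ^ mn.1 * (b ^ 2 * t ^ 2) ^ mn.2) := by
      intro mn; simp only [hF, hgO]; ring
    simp_rw [this]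
    rw [tsum_mul_left, hprod]
  show ∑' kl : Lam, F kl.val = _
  rw [key, hE, hO, div_eq_mul_inv, mul_inv]
  ring
end

section
/- Let p be a prime, let χ₁, χ₂ : ℚ_p^× → ℂ^× be group homomorphisms that are trivial on ℤ_p^× (unramified characters of ℚ_p^×), and let s ∈ ℂ with |χ₁(p)| < p^{Re(s)} and |χ₂(p)| < p^{Re(s)}. Then the family ((k,l) ↦ χ₁(p^k)·χ₂(p^l)·p^{−s(k+l)}) indexed by (k,l) ∈ Λ is absolutely summable and ∑_{(k,l)∈Λ} χ₁(p^k)·χ₂(p^l)·p^{−s(k+l)} = (1 + χ₁(p)χ₂(p)p^{−2s}) / ((1 − χ₁(p²)p^{−2s})(1 − χ₂(p²)p^{−2s})). -/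
lemma lam_norm_summable {a b : ℂ} (hna : ‖a‖ < 1) (hnb : ‖b‖ < 1) :
    Summable (fun kl : ℕ × ℕ => ‖a‖ ^ kl.1 * ‖b‖ ^ kl.2) :=
  Summable.mul_of_nonneg (summable_geometric_of_lt_one (norm_nonneg a) hna)
    (summable_geometric_of_lt_one (norm_nonneg b) hnb)
    (fun k => pow_nonneg (norm_nonneg a) k) (fun l => pow_nonneg (norm_nonneg b) l)

lemma lam_summable {a b : ℂ} (hna : ‖a‖ < 1) (hnb : ‖b‖ < 1) :
    Summable (fun kl : ℕ × ℕ => a ^ kl.1 * b ^ kl.2) := by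
  apply Summable.of_norm
  refine (lam_norm_summable hna hnb).congr fun kl => ?_
  rw [norm_mul, norm_pow, norm_pow]

lemma geom_prod_tsum {a b : ℂ} (hna : ‖a‖ < 1) (hnb : ‖b‖ < 1) :
    ∑' kl : ℕ × ℕ, a ^ kl.1 * b ^ kl.2 = (1 - a)⁻¹ * (1 - b)⁻¹ := by
  exact ((hasSum_geometric_of_norm_lt_one hna).mul_eq (hasSum_geometric_of_norm_lt_one hnb)
    ((lam_summable hna hnb).hasSum)).symm

lemma lam_tsum {a b : ℂ} (hna : ‖a‖ < 1) (hnb : ‖b‖ < 1) :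
    ∑' kl : Lam, a ^ kl.val.1 * b ^ kl.val.2
      = (1 + a * b) / ((1 - a ^ 2) * (1 - b ^ 2)) := by
  have hna' : ‖-a‖ < 1 := by rwa [norm_neg]
  have hnb' : ‖-b‖ < 1 := by rwa [norm_neg]
  rw [tsum_subtype Lam (fun kl : ℕ × ℕ => a ^ kl.1 * b ^ kl.2)]
  have e2 : (fun kl : ℕ × ℕ => Lam.indicator (fun kl : ℕ × ℕ => a ^ kl.1 * b ^ kl.2) kl)
      = fun kl : ℕ × ℕ => (a ^ kl.1 * b ^ kl.2 + (-a) ^ kl.1 * (-b) ^ kl.2) / 2 := by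
    funext kl
    have hneg : (-a) ^ kl.1 * (-b) ^ kl.2 = (-1 : ℂ) ^ (kl.1 + kl.2) * (a ^ kl.1 * b ^ kl.2) := by
      rw [neg_pow, neg_pow, pow_add]; ring
    by_cases h : Even (kl.1 + kl.2)
    · rw [Set.indicator_of_mem (by exact h : kl ∈ Lam), hneg, h.neg_one_pow]
      ring
    · rw [Set.indicator_of_notMem (by exact h : kl ∉ Lam), hneg,
        (Nat.not_even_iff_odd.mp h).neg_one_pow]
      ring
  rw [e2]
  have e3 : ∑' kl : ℕ × ℕ, (a ^ kl.1 * b ^ kl.2 + (-a) ^ kl.1 * (-b) ^ kl.2) / 2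
      = ((∑' kl : ℕ × ℕ, a ^ kl.1 * b ^ kl.2)
        + ∑' kl : ℕ × ℕ, (-a) ^ kl.1 * (-b) ^ kl.2) / 2 := by
    rw [← Summable.tsum_add (lam_summable hna hnb) (lam_summable hna' hnb'), tsum_div_const]
  rw [e3, geom_prod_tsum hna hnb, geom_prod_tsum hna' hnb', sub_neg_eq_add, sub_neg_eq_add]
  have hne1 : (1 : ℂ) - a ≠ 0 := by
    intro h
    have : a = 1 := by linear_combination -h
    rw [this] at hna; simp at hna
  have hne2 : (1 : ℂ) + a ≠ 0 := by
    intro h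
    have : a = -1 := by linear_combination h
    rw [this] at hna; simp at hna
  have hne3 : (1 : ℂ) - b ≠ 0 := by
    intro h
    have : b = 1 := by linear_combination -h
    rw [this] at hnb; simp at hnb
  have hne4 : (1 : ℂ) + b ≠ 0 := by
    intro h
    have : b = -1 := by linear_combination h
    rw [this] at hnb; simp at hnb
  rw [show (1 : ℂ) - a ^ 2 = (1 - a) * (1 + a) by ring,
    show (1 : ℂ) - b ^ 2 = (1 - b) * (1 + b) by ring]
  field_simp
  ring

/-- Let p be a prime, χ₁, χ₂ unramified characters of ℚ_p^× (i.e. group homomorphisms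
ℚ_p^× → ℂ^× trivial on ℤ_p^×, the units of norm 1), and s ∈ ℂ with |χ₁(p)| < p^(Re s)
and |χ₂(p)| < p^(Re s).  Then ((k,l) ↦ χ₁(p^k)·χ₂(p^l)·p^(−s(k+l))) indexed by Λ is
absolutely summable and its sum equals
(1 + χ₁(p)χ₂(p)p^(−2s)) / ((1 − χ₁(p²)p^(−2s))(1 − χ₂(p²)p^(−2s))). -/
theorem unramified_character_hecke_series (p : ℕ) [Fact p.Prime]
    (χ₁ χ₂ : ℚ_[p]ˣ →* ℂˣ)
    (h₁ : ∀ u : ℚ_[p]ˣ, ‖(u : ℚ_[p])‖ = 1 → χ₁ u = 1)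
    (h₂ : ∀ u : ℚ_[p]ˣ, ‖(u : ℚ_[p])‖ = 1 → χ₂ u = 1)
    (pu : ℚ_[p]ˣ) (hpu : (pu : ℚ_[p]) = (p : ℚ_[p]))
    (s : ℂ)
    (hs₁ : ‖((χ₁ pu : ℂˣ) : ℂ)‖ < (p : ℝ) ^ s.re)
    (hs₂ : ‖((χ₂ pu : ℂˣ) : ℂ)‖ < (p : ℝ) ^ s.re) :
    Summable (fun kl : Lam =>
      ‖(((χ₁ (pu ^ kl.val.1) : ℂˣ) : ℂ) * ((χ₂ (pu ^ kl.val.2) : ℂˣ) : ℂ) *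
        (p : ℂ) ^ (-(s * ((kl.val.1 + kl.val.2 : ℕ) : ℂ))))‖) ∧
    ∑' kl : Lam, ((χ₁ (pu ^ kl.val.1) : ℂˣ) : ℂ) * ((χ₂ (pu ^ kl.val.2) : ℂˣ) : ℂ) *
        (p : ℂ) ^ (-(s * ((kl.val.1 + kl.val.2 : ℕ) : ℂ)))
      = (1 + ((χ₁ pu : ℂˣ) : ℂ) * ((χ₂ pu : ℂˣ) : ℂ) * (p : ℂ) ^ (-2 * s)) /
        ((1 - ((χ₁ (pu ^ 2) : ℂˣ) : ℂ) * (p : ℂ) ^ (-2 * s)) *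
         (1 - ((χ₂ (pu ^ 2) : ℂˣ) : ℂ) * (p : ℂ) ^ (-2 * s))) := by
  have hp : (0:ℝ) < p := Nat.cast_pos.mpr (Fact.out : p.Prime).pos
  obtain ⟨a, ha⟩ : ∃ a : ℂ, ((χ₁ pu : ℂˣ) : ℂ) * (p:ℂ) ^ (-s) = a := ⟨_, rfl⟩
  obtain ⟨b, hb⟩ : ∃ b : ℂ, ((χ₂ pu : ℂˣ) : ℂ) * (p:ℂ) ^ (-s) = b := ⟨_, rfl⟩
  have habs : ‖((p:ℂ) ^ (-s))‖ = (p:ℝ) ^ (-s.re) := by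
    rw [show ((p:ℂ)) = ((p:ℝ):ℂ) by push_cast; ring,
      Complex.norm_cpow_eq_rpow_re_of_pos hp]
    simp
  have hrpos : (0:ℝ) < (p:ℝ) ^ (-s.re) := Real.rpow_pos_of_pos hp _
  have hmul1 : (p:ℝ) ^ s.re * (p:ℝ) ^ (-s.re) = 1 := by
    rw [← Real.rpow_add hp]; simp
  have hna : ‖a‖ < 1 := by
    rw [← ha, ← hmul1, norm_mul, habs]
    exact mul_lt_mul_of_pos_right hs₁ hrpos
  have hnb : ‖b‖ < 1 := by
    rw [← hb, ← hmul1, norm_mul, habs]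
    exact mul_lt_mul_of_pos_right hs₂ hrpos
  have hterm : ∀ k l : ℕ,
      ((χ₁ (pu ^ k) : ℂˣ) : ℂ) * ((χ₂ (pu ^ l) : ℂˣ) : ℂ) *
        (p : ℂ) ^ (-(s * ((k + l : ℕ) : ℂ))) = a ^ k * b ^ l := by
    intro k l
    rw [map_pow, map_pow, Units.val_pow_eq_pow_val, Units.val_pow_eq_pow_val,
      show (-(s * ((k + l : ℕ) : ℂ))) = ((k + l : ℕ) : ℂ) * (-s) by ring,
      Complex.cpow_nat_mul, pow_add, ← ha, ← hb]
    ring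
  constructor
  · refine (((lam_norm_summable hna hnb).subtype Lam).congr fun kl => ?_)
    show ‖a‖ ^ kl.val.1 * ‖b‖ ^ kl.val.2 = _
    rw [hterm kl.val.1 kl.val.2,
      norm_mul, norm_pow, norm_pow]
  · have hrw : ∀ (χ : ℚ_[p]ˣ →* ℂˣ),
        ((χ (pu ^ 2) : ℂˣ) : ℂ) * (p : ℂ) ^ (-2 * s) = (((χ pu : ℂˣ) : ℂ) * (p:ℂ) ^ (-s)) ^ 2 := by
      intro χ
      rw [map_pow, Units.val_pow_eq_pow_val,
        show ((-2 : ℂ) * s) = ((2 : ℕ) : ℂ) * (-s) by push_cast; ring,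
        Complex.cpow_nat_mul]
      ring
    have hab : ((χ₁ pu : ℂˣ) : ℂ) * ((χ₂ pu : ℂˣ) : ℂ) * (p : ℂ) ^ (-2 * s) = a * b := by
      rw [show ((-2 : ℂ) * s) = ((2 : ℕ) : ℂ) * (-s) by push_cast; ring,
        Complex.cpow_nat_mul, ← ha, ← hb]
      ring
    rw [hrw χ₁, hrw χ₂, ha, hb, hab]
    rw [tsum_congr (fun kl : Lam => hterm kl.val.1 kl.val.2)]
    exact lam_tsum hna hnb
end
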